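/- arXiv:1701.01154 — 3 statements merged into one kernel-verified Lean document; each statement's English description precedes it below -/
import Mathlib

section
/- Let n ≥ 1 and define the sequence s : ZMod (2^n) → H by s(a) = i^⌊a.val²/2^(n−1)⌋ · j^⌊2·a.val²/2^(n−1)⌋ (where ⌊·⌋ denotes the floor of the quotient, i.e. natural-number division). If τ ∈ ZMod (2^n) has odd representative τ.val, then the periodic autocorrelation θ_s(τ) = Σ_{a ∈ ZMod (2^n)} s(a)·(s(a+τ))* equals 0. -/
noncomputable def qi : Quaternion ℝ := ⟨0,1,0,0⟩
noncomputable def qj : Quaternion ℝ := ⟨0,0,1,0⟩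
noncomputable def qk : Quaternion ℝ := ⟨0,0,0,1⟩

lemma qi_sq : qi^2 = -1 := by rw [sq]; ext <;> simp [show qi.re = 0 from rfl, show qi.imI = 1 from rfl, show qi.imJ = 0 from rfl, show qi.imK = 0 from rfl] <;> rfl
lemma qj_sq : qj^2 = -1 := by rw [sq]; ext <;> simp [show qj.re = 0 from rfl, show qj.imI = 0 from rfl, show qj.imJ = 1 from rfl, show qj.imK = 0 from rfl] <;> rfl
lemma star_qi : star qi = -qi := by ext <;> simp [show qi.re = 0 from rfl]
lemma qi_pow_even (k : ℕ) : qi ^ (2 * k) = (-1 : Quaternion ℝ) ^ k := by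
  rw [pow_mul, qi_sq]
lemma qj_pow_four (k : ℕ) : qj ^ (4 * k) = 1 := by
  rw [pow_mul, show qj^4 = 1 by rw [show 4 = 2*2 from rfl, pow_mul, qj_sq, neg_one_sq], one_pow]

lemma neg_one_pow_comm (k : ℕ) (x : Quaternion ℝ) :
    (-1:Quaternion ℝ)^k * x = x * (-1:Quaternion ℝ)^k :=
  ((Commute.neg_one_left x).pow_left k).eq

lemma step (m w : ℕ) (hm : 0 < m) :
    qi ^ ((w + 2*m)^2 / (2*m)) * qj ^ (2 * (w + 2*m)^2 / (2*m))
      = (-1 : Quaternion ℝ) ^ (w + m) * (qi ^ (w^2 / (2*m)) * qj ^ (2 * w^2 / (2*m))) := by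
  have hMpos : 0 < 2 * m := by omega
  have e1 : (w + 2*m)^2 / (2*m) = w^2 / (2*m) + 2*(w + m) := by
    have h1 : (w + 2*m)^2 = w^2 + (2*(w + m)) * (2*m) := by ring
    rw [h1, Nat.add_mul_div_right _ _ hMpos]
  have e2 : 2*(w + 2*m)^2 / (2*m) = 2*w^2 / (2*m) + 4*(w + m) := by
    have h2 : 2*(w + 2*m)^2 = 2*w^2 + (4*(w + m)) * (2*m) := by ring
    rw [h2, Nat.add_mul_div_right _ _ hMpos]
  rw [e1, e2, pow_add, pow_add, qi_pow_even, qj_pow_four, mul_one,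
    ← mul_assoc, ← neg_one_pow_comm, mul_assoc]

lemma pair_neg (k1 k2 : ℕ) (x y : Quaternion ℝ) (h : Odd (k1 + k2)) :
    ((-1:Quaternion ℝ)^k1 * x) * star ((-1:Quaternion ℝ)^k2 * y) = -(x * star y) := by
  rcases Nat.even_or_odd k1 with h1 | h1
  · have h2 : Odd k2 := by
      rw [Nat.odd_iff] at h ⊢; rw [Nat.even_iff] at h1; omega
    rw [h1.neg_one_pow, h2.neg_one_pow]
    simp [star_neg, mul_neg, neg_mul]
  · have h2 : Even k2 := by
      rw [Nat.odd_iff] at h h1; rw [Nat.even_iff]; omega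
    rw [h1.neg_one_pow, h2.neg_one_pow]
    simp [star_neg, mul_neg, neg_mul]

theorem quatseq_odd_shift_autocorrelation_zero (n : ℕ) (hn : 1 ≤ n)
    (s : ZMod (2 ^ n) → Quaternion ℝ)
    (hs : ∀ a : ZMod (2 ^ n),
      s a = qi ^ (a.val ^ 2 / 2 ^ (n - 1)) * qj ^ (2 * a.val ^ 2 / 2 ^ (n - 1)))
    (τ : ZMod (2 ^ n)) (hτ : Odd τ.val) :
    ∑ a : ZMod (2 ^ n), s a * star (s (a + τ)) = 0 := by
  haveI : NeZero (2^n) := ⟨pow_ne_zero _ two_ne_zero⟩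
  set M' : ZMod (2^n) := ((2^(n-1) : ℕ) : ZMod (2^n)) with hM'
  have key : ∀ a : ZMod (2^n),
      s (a + M') * star (s (a + M' + τ)) = -(s a * star (s (a + τ))) := by
    rcases eq_or_lt_of_le hn with hn1 | hn2
    · -- n = 1
      subst hn1
      have hτ1 : τ = 1 := by
        have h2 : τ.val < 2^1 := ZMod.val_lt τ
        have h3 : τ.val = 1 := by rcases hτ with ⟨c, hc⟩; omega
        calc τ = ((τ.val : ℕ) : ZMod (2^1)) := (ZMod.natCast_zmod_val τ).symm
        _ = 1 := by rw [h3]; norm_num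
      have hM1 : M' = 1 := by rw [hM']; norm_num
      intro a
      have hav : a.val < 2^1 := ZMod.val_lt a
      have ha01 : a = 0 ∨ a = 1 := by
        have hv := (ZMod.natCast_zmod_val a).symm
        interval_cases h : a.val
        · left; rw [hv]; norm_num
        · right; rw [hv]; norm_num
      have hs0 : s 0 = 1 := by rw [hs 0]; norm_num
      have hs1 : s 1 = -qi := by
        rw [hs 1]
        have h1 : (1 : ZMod (2^1)).val = 1 := by decide
        rw [h1]; norm_num [qj_sq]
      have h11 : (1 + 1 : ZMod (2^1)) = 0 := by decide
      rcases ha01 with rfl | rfl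
      · rw [hM1, hτ1, zero_add, h11, hs0, hs1]
        simp [star_qi]
      · rw [hM1, hτ1, h11, zero_add, hs0, hs1]
        simp [star_qi]
    · -- n ≥ 2
      set m : ℕ := 2^(n-2) with hm
      have hmpos : 0 < m := Nat.pow_pos (by norm_num)
      have hMm : 2^(n-1) = 2*m := by
        rw [hm, ← pow_succ']; congr 1; omega
      have hN : 2^n = 2*(2*m) := by
        rw [← hMm, ← pow_succ']; congr 1; omega
      have hMlt : 2^(n-1) < 2^n := Nat.pow_lt_pow_right (by norm_num) (by omega)
      have hMval : M'.val = 2*m := by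
        rw [hM', ZMod.val_cast_of_lt hMlt, hMm]
      have s_add : ∀ a : ZMod (2^n), s (a + M') = (-1:Quaternion ℝ)^(a.val + m) * s a := by
        intro a
        have hav : a.val < 2^n := ZMod.val_lt a
        have hval : (a + M').val = (a.val + 2*m) % (2^n) := by
          rw [ZMod.val_add, hMval]
        rcases lt_or_ge a.val (2*m) with hlt | hge
        · have hv2 : (a + M').val = a.val + 2*m := by
            rw [hval, Nat.mod_eq_of_lt (by omega)]
          rw [hs (a + M'), hs a, hv2, hMm]
          exact step m a.val hmpos
        · have hsub : a.val + 2*m - 2^n = a.val - 2*m := by omega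
          have hv2 : (a + M').val = a.val - 2*m := by
            rw [hval, Nat.mod_eq_sub_mod (by omega), hsub,
              Nat.mod_eq_of_lt (by omega)]
          set w : ℕ := a.val - 2*m with hw
          have hvw : a.val = w + 2*m := by omega
          rw [hs (a + M'), hs a, hv2, hvw, hMm, step m w hmpos,
            ← mul_assoc, ← pow_add,
            show w + 2*m + m + (w + m) = 2*(w+2*m) by ring,
            pow_mul, neg_one_sq, one_pow, one_mul]
      intro a
      have hcomm : a + M' + τ = (a + τ) + M' := by ring
      rw [hcomm, s_add a, s_add (a + τ)]
      have hodd : Odd ((a.val + m) + ((a + τ).val + m)) := by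
        have hv : (a+τ).val = (a.val + τ.val) % 2^n := ZMod.val_add a τ
        have hdvd : (2:ℕ) ∣ 2^n := dvd_pow_self 2 (by omega)
        have h2 : (a+τ).val % 2 = (a.val + τ.val) % 2 := by
          rw [hv, Nat.mod_mod_of_dvd _ hdvd]
        have hτ2 := Nat.odd_iff.mp hτ
        rw [Nat.odd_iff]; omega
      exact pair_neg _ _ _ _ hodd
  have h1 : ∑ a : ZMod (2^n), s (a + M') * star (s (a + M' + τ))
      = ∑ a : ZMod (2^n), s a * star (s (a + τ)) :=
    Fintype.sum_equiv (Equiv.addRight M') _ _ (fun a => rfl)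
  have h2 : ∑ a : ZMod (2^n), s (a + M') * star (s (a + M' + τ))
      = -∑ a : ZMod (2^n), s a * star (s (a + τ)) := by
    simp_rw [key]
    exact Finset.sum_neg_distrib _
  have h3 := h1.symm.trans h2
  have h4 : (2:ℝ) • (∑ a : ZMod (2^n), s a * star (s (a + τ))) = 0 := by
    rw [two_smul]
    nth_rewrite 2 [h3]
    exact add_neg_cancel _
  rcases smul_eq_zero.mp h4 with h | h
  · norm_num at h
  · exact h
end

section
/- For each n with 1 ≤ n ≤ 6, the sequence s : ZMod (2^n) → H defined by s(a) = i^⌊a.val²/2^(n−1)⌋ · j^⌊2·a.val²/2^(n−1)⌋ is perfect: for every τ ∈ ZMod (2^n) with τ ≠ 0, Σ_{a ∈ ZMod (2^n)} s(a)·(s(a+τ))* = 0. -/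
def zi : Quaternion ℤ := ⟨0,1,0,0⟩
def zj : Quaternion ℤ := ⟨0,0,1,0⟩

instance : DecidableEq (Quaternion ℤ) := fun a b =>
  decidable_of_iff (a.re = b.re ∧ a.imI = b.imI ∧ a.imJ = b.imJ ∧ a.imK = b.imK)
    (by constructor
        · rintro ⟨h1, h2, h3, h4⟩; exact QuaternionAlgebra.ext h1 h2 h3 h4
        · rintro rfl; exact ⟨rfl, rfl, rfl, rfl⟩)

def g (n : ℕ) (a : ZMod (2 ^ n)) : Quaternion ℤ :=
  zi ^ (a.val ^ 2 / 2 ^ (n - 1) % 4) * zj ^ (2 * a.val ^ 2 / 2 ^ (n - 1) % 4)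

def φ : Quaternion ℤ →+* Quaternion ℝ where
  toFun q := ⟨(q.re : ℝ), q.imI, q.imJ, q.imK⟩
  map_one' := by
    ext <;> simp
    · erw [Quaternion.re_one, Quaternion.re_one]; simp
    · erw [Quaternion.imI_one, Quaternion.imI_one]; simp
    · erw [Quaternion.imJ_one, Quaternion.imJ_one]; simp
    · erw [Quaternion.imK_one, Quaternion.imK_one]; simp
  map_mul' p q := by
    ext <;> simp [Quaternion.re_mul, Quaternion.imI_mul, Quaternion.imJ_mul,
      Quaternion.imK_mul]
    · erw [Quaternion.re_mul]
    · erw [Quaternion.imI_mul]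
    · erw [Quaternion.imJ_mul]
    · erw [Quaternion.imK_mul]
  map_zero' := by
    ext <;> simp
    · erw [Quaternion.re_zero, Quaternion.re_zero]; simp
    · erw [Quaternion.imI_zero, Quaternion.imI_zero]; simp
    · erw [Quaternion.imJ_zero, Quaternion.imJ_zero]; simp
    · erw [Quaternion.imK_zero, Quaternion.imK_zero]; simp
  map_add' p q := by
    ext <;> push_cast <;> simp
    · erw [Quaternion.re_add]
    · erw [Quaternion.imI_add]
    · erw [Quaternion.imJ_add]
    · erw [Quaternion.imK_add]

lemma φ_re (q : Quaternion ℤ) : (φ q).re = q.re := rfl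
lemma φ_imI (q : Quaternion ℤ) : (φ q).imI = q.imI := rfl
lemma φ_imJ (q : Quaternion ℤ) : (φ q).imJ = q.imJ := rfl
lemma φ_imK (q : Quaternion ℤ) : (φ q).imK = q.imK := rfl

lemma φ_star (q : Quaternion ℤ) : φ (star q) = star (φ q) := by
  ext <;> simp [φ_re, φ_imI, φ_imJ, φ_imK, Quaternion.re_star, Quaternion.imI_star, Quaternion.imJ_star,
    Quaternion.imK_star]

lemma φ_zi : φ zi = qi := by ext <;> simp only [φ_re, φ_imI, φ_imJ, φ_imK] <;> simp [zi, qi]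
lemma φ_zj : φ zj = qj := by ext <;> simp only [φ_re, φ_imI, φ_imJ, φ_imK] <;> simp [zj, qj]

lemma qi4 : qi ^ 4 = 1 := by
  have h2 : qi ^ 2 = -1 := by
    rw [sq]; ext <;> simp [Quaternion.re_mul, Quaternion.imI_mul, Quaternion.imJ_mul,
      Quaternion.imK_mul] <;> simp [qi, Quaternion.re_one, Quaternion.imI_one, Quaternion.imJ_one, Quaternion.imK_one]
  rw [show (4:ℕ) = 2*2 from rfl, pow_mul, h2, neg_one_sq]

lemma qj4 : qj ^ 4 = 1 := by
  have h2 : qj ^ 2 = -1 := by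
    rw [sq]; ext <;> simp [Quaternion.re_mul, Quaternion.imI_mul, Quaternion.imJ_mul,
      Quaternion.imK_mul] <;> simp [qj, Quaternion.re_one, Quaternion.imI_one, Quaternion.imJ_one, Quaternion.imK_one]
  rw [show (4:ℕ) = 2*2 from rfl, pow_mul, h2, neg_one_sq]

set_option maxRecDepth 100000 in
set_option maxHeartbeats 4000000 in
theorem quatseq_perfect (n : ℕ) (hn1 : 1 ≤ n) (hn6 : n ≤ 6)
    (s : ZMod (2 ^ n) → Quaternion ℝ)
    (hs : ∀ a : ZMod (2 ^ n),
      s a = qi ^ (a.val ^ 2 / 2 ^ (n - 1)) * qj ^ (2 * a.val ^ 2 / 2 ^ (n - 1)))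
    (τ : ZMod (2 ^ n)) (hτ : τ ≠ 0) :
    ∑ a : ZMod (2 ^ n), s a * star (s (a + τ)) = 0 := by
  have hφg : ∀ a : ZMod (2 ^ n), s a = φ (g n a) := by
    intro a
    rw [hs a, g, map_mul, map_pow, map_pow, φ_zi, φ_zj,
      ← pow_eq_pow_mod _ qi4, ← pow_eq_pow_mod _ qj4]
  have H : ∀ τ : ZMod (2 ^ n), τ ≠ 0 →
      ∑ a : ZMod (2 ^ n), g n a * star (g n (a + τ)) = 0 := by
    interval_cases n <;> decide
  calc ∑ a : ZMod (2 ^ n), s a * star (s (a + τ))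
      = φ (∑ a : ZMod (2 ^ n), g n a * star (g n (a + τ))) := by
        rw [map_sum]
        exact Finset.sum_congr rfl fun a _ => by rw [hφg, hφg, map_mul, φ_star]
    _ = 0 := by rw [H τ hτ, map_zero]
end

section
/- Let s : ZMod 9 → H be the sequence [1+j, 1+j, 1+j, 1+j, (−1+√3·i−j+√3·k)/2, (−1−√3·i−j−√3·k)/2, 1+j, (−1−√3·i−j−√3·k)/2, (−1+√3·i−j+√3·k)/2]. Then s is perfect: Σ_{a ∈ ZMod 9} s(a)·(s(a+τ))* = 0 for every τ ∈ ZMod 9 with τ ≠ 0. -/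
noncomputable def leukhinA : Quaternion ℝ := 1 + qj
noncomputable def leukhinB : Quaternion ℝ :=
  (1 / 2 : ℝ) • (-1 + Real.sqrt 3 • qi - qj + Real.sqrt 3 • qk)
noncomputable def leukhinC : Quaternion ℝ :=
  (1 / 2 : ℝ) • (-1 - Real.sqrt 3 • qi - qj - Real.sqrt 3 • qk)

open Quaternion

private lemma hA' : leukhinA = ⟨1,0,1,0⟩ := by ext <;> simp [leukhinA] <;> simp [qj]
private lemma hB' : leukhinB = ⟨-(1/2), Real.sqrt 3/2, -(1/2), Real.sqrt 3/2⟩ := by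
  ext <;> simp [leukhinB] <;> simp [qi, qj, qk] <;> ring
private lemma hC' : leukhinC = ⟨-(1/2), -(Real.sqrt 3/2), -(1/2), -(Real.sqrt 3/2)⟩ := by
  ext <;> simp [leukhinC] <;> simp [qi, qj, qk] <;> ring

private lemma leukhin_case1 : leukhinA * star leukhinA + leukhinA * star leukhinA + leukhinA * star leukhinA + leukhinA * star leukhinB + leukhinB * star leukhinC + leukhinC * star leukhinA + leukhinA * star leukhinC + leukhinC * star leukhinB + leukhinB * star leukhinA = 0 := by
  have hr : Real.sqrt 3 * Real.sqrt 3 = 3 := Real.mul_self_sqrt (by norm_num)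
  ext <;> simp only [Quaternion.re_add, Quaternion.imI_add, Quaternion.imJ_add, Quaternion.imK_add, Quaternion.re_mul, Quaternion.imI_mul, Quaternion.imJ_mul, Quaternion.imK_mul, Quaternion.re_star, Quaternion.imI_star, Quaternion.imJ_star, Quaternion.imK_star, Quaternion.re_zero, Quaternion.imI_zero, Quaternion.imJ_zero, Quaternion.imK_zero] <;> rw [hA', hB', hC'] <;> simp <;> nlinarith [hr]

private lemma leukhin_case2 : leukhinA * star leukhinA + leukhinA * star leukhinA + leukhinA * star leukhinB + leukhinA * star leukhinC + leukhinB * star leukhinA + leukhinC * star leukhinC + leukhinA * star leukhinB + leukhinC * star leukhinA + leukhinB * star leukhinA = 0 := by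
  have hr : Real.sqrt 3 * Real.sqrt 3 = 3 := Real.mul_self_sqrt (by norm_num)
  ext <;> simp only [Quaternion.re_add, Quaternion.imI_add, Quaternion.imJ_add, Quaternion.imK_add, Quaternion.re_mul, Quaternion.imI_mul, Quaternion.imJ_mul, Quaternion.imK_mul, Quaternion.re_star, Quaternion.imI_star, Quaternion.imJ_star, Quaternion.imK_star, Quaternion.re_zero, Quaternion.imI_zero, Quaternion.imJ_zero, Quaternion.imK_zero] <;> rw [hA', hB', hC'] <;> simp <;> nlinarith [hr]

private lemma leukhin_case3 : leukhinA * star leukhinA + leukhinA * star leukhinB + leukhinA * star leukhinC + leukhinA * star leukhinA + leukhinB * star leukhinC + leukhinC * star leukhinB + leukhinA * star leukhinA + leukhinC * star leukhinA + leukhinB * star leukhinA = 0 := by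
  have hr : Real.sqrt 3 * Real.sqrt 3 = 3 := Real.mul_self_sqrt (by norm_num)
  ext <;> simp only [Quaternion.re_add, Quaternion.imI_add, Quaternion.imJ_add, Quaternion.imK_add, Quaternion.re_mul, Quaternion.imI_mul, Quaternion.imJ_mul, Quaternion.imK_mul, Quaternion.re_star, Quaternion.imI_star, Quaternion.imJ_star, Quaternion.imK_star, Quaternion.re_zero, Quaternion.imI_zero, Quaternion.imJ_zero, Quaternion.imK_zero] <;> rw [hA', hB', hC'] <;> simp <;> nlinarith [hr]

private lemma leukhin_case4 : leukhinA * star leukhinB + leukhinA * star leukhinC + leukhinA * star leukhinA + leukhinA * star leukhinC + leukhinB * star leukhinB + leukhinC * star leukhinA + leukhinA * star leukhinA + leukhinC * star leukhinA + leukhinB * star leukhinA = 0 := by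
  have hr : Real.sqrt 3 * Real.sqrt 3 = 3 := Real.mul_self_sqrt (by norm_num)
  ext <;> simp only [Quaternion.re_add, Quaternion.imI_add, Quaternion.imJ_add, Quaternion.imK_add, Quaternion.re_mul, Quaternion.imI_mul, Quaternion.imJ_mul, Quaternion.imK_mul, Quaternion.re_star, Quaternion.imI_star, Quaternion.imJ_star, Quaternion.imK_star, Quaternion.re_zero, Quaternion.imI_zero, Quaternion.imJ_zero, Quaternion.imK_zero] <;> rw [hA', hB', hC'] <;> simp <;> nlinarith [hr]

private lemma leukhin_case5 : leukhinA * star leukhinC + leukhinA * star leukhinA + leukhinA * star leukhinC + leukhinA * star leukhinB + leukhinB * star leukhinA + leukhinC * star leukhinA + leukhinA * star leukhinA + leukhinC * star leukhinA + leukhinB * star leukhinB = 0 := by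
  have hr : Real.sqrt 3 * Real.sqrt 3 = 3 := Real.mul_self_sqrt (by norm_num)
  ext <;> simp only [Quaternion.re_add, Quaternion.imI_add, Quaternion.imJ_add, Quaternion.imK_add, Quaternion.re_mul, Quaternion.imI_mul, Quaternion.imJ_mul, Quaternion.imK_mul, Quaternion.re_star, Quaternion.imI_star, Quaternion.imJ_star, Quaternion.imK_star, Quaternion.re_zero, Quaternion.imI_zero, Quaternion.imJ_zero, Quaternion.imK_zero] <;> rw [hA', hB', hC'] <;> simp <;> nlinarith [hr]

private lemma leukhin_case6 : leukhinA * star leukhinA + leukhinA * star leukhinC + leukhinA * star leukhinB + leukhinA * star leukhinA + leukhinB * star leukhinA + leukhinC * star leukhinA + leukhinA * star leukhinA + leukhinC * star leukhinB + leukhinB * star leukhinC = 0 := by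
  have hr : Real.sqrt 3 * Real.sqrt 3 = 3 := Real.mul_self_sqrt (by norm_num)
  ext <;> simp only [Quaternion.re_add, Quaternion.imI_add, Quaternion.imJ_add, Quaternion.imK_add, Quaternion.re_mul, Quaternion.imI_mul, Quaternion.imJ_mul, Quaternion.imK_mul, Quaternion.re_star, Quaternion.imI_star, Quaternion.imJ_star, Quaternion.imK_star, Quaternion.re_zero, Quaternion.imI_zero, Quaternion.imJ_zero, Quaternion.imK_zero] <;> rw [hA', hB', hC'] <;> simp <;> nlinarith [hr]

private lemma leukhin_case7 : leukhinA * star leukhinC + leukhinA * star leukhinB + leukhinA * star leukhinA + leukhinA * star leukhinA + leukhinB * star leukhinA + leukhinC * star leukhinA + leukhinA * star leukhinB + leukhinC * star leukhinC + leukhinB * star leukhinA = 0 := by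
  have hr : Real.sqrt 3 * Real.sqrt 3 = 3 := Real.mul_self_sqrt (by norm_num)
  ext <;> simp only [Quaternion.re_add, Quaternion.imI_add, Quaternion.imJ_add, Quaternion.imK_add, Quaternion.re_mul, Quaternion.imI_mul, Quaternion.imJ_mul, Quaternion.imK_mul, Quaternion.re_star, Quaternion.imI_star, Quaternion.imJ_star, Quaternion.imK_star, Quaternion.re_zero, Quaternion.imI_zero, Quaternion.imJ_zero, Quaternion.imK_zero] <;> rw [hA', hB', hC'] <;> simp <;> nlinarith [hr]

private lemma leukhin_case8 : leukhinA * star leukhinB + leukhinA * star leukhinA + leukhinA * star leukhinA + leukhinA * star leukhinA + leukhinB * star leukhinA + leukhinC * star leukhinB + leukhinA * star leukhinC + leukhinC * star leukhinA + leukhinB * star leukhinC = 0 := by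
  have hr : Real.sqrt 3 * Real.sqrt 3 = 3 := Real.mul_self_sqrt (by norm_num)
  ext <;> simp only [Quaternion.re_add, Quaternion.imI_add, Quaternion.imJ_add, Quaternion.imK_add, Quaternion.re_mul, Quaternion.imI_mul, Quaternion.imJ_mul, Quaternion.imK_mul, Quaternion.re_star, Quaternion.imI_star, Quaternion.imJ_star, Quaternion.imK_star, Quaternion.re_zero, Quaternion.imI_zero, Quaternion.imJ_zero, Quaternion.imK_zero] <;> rw [hA', hB', hC'] <;> simp <;> nlinarith [hr]

theorem leukhin_perfect_seq_length9 (s : ZMod 9 → Quaternion ℝ)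
    (hs : ∀ a : ZMod 9,
      s a = ![leukhinA, leukhinA, leukhinA, leukhinA, leukhinB, leukhinC,
        leukhinA, leukhinC, leukhinB] ⟨a.val, a.val_lt⟩)
    (τ : ZMod 9) (hτ : τ ≠ 0) :
    ∑ a : ZMod 9, s a * star (s (a + τ)) = 0 := by
  have expand : ∀ τ : ZMod 9, ∑ a : ZMod 9, s a * star (s (a + τ)) =
      s 0 * star (s (0+τ)) + s 1 * star (s (1+τ)) + s 2 * star (s (2+τ))
      + s 3 * star (s (3+τ)) + s 4 * star (s (4+τ)) + s 5 * star (s (5+τ))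
      + s 6 * star (s (6+τ)) + s 7 * star (s (7+τ)) + s 8 * star (s (8+τ)) := by
    intro τ
    show ∑ a : Fin 9, _ = _
    rw [Fin.sum_univ_succ, Fin.sum_univ_succ, Fin.sum_univ_succ, Fin.sum_univ_succ,
      Fin.sum_univ_succ, Fin.sum_univ_succ, Fin.sum_univ_succ, Fin.sum_univ_succ,
      Fin.sum_univ_one]
    norm_num [add_assoc]
    erw [zero_add]
    rfl
  fin_cases τ
  · exact absurd rfl hτ
  · erw [expand]; simp only [hs]; exact leukhin_case1
  · erw [expand]; simp only [hs]; exact leukhin_case2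
  · erw [expand]; simp only [hs]; exact leukhin_case3
  · erw [expand]; simp only [hs]; exact leukhin_case4
  · erw [expand]; simp only [hs]; exact leukhin_case5
  · erw [expand]; simp only [hs]; exact leukhin_case6
  · erw [expand]; simp only [hs]; exact leukhin_case7
  · erw [expand]; simp only [hs]; exact leukhin_case8
end
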